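/- Let b₁ < 0 < b₂, k := −b₂/b₁ > 0, and let a, b, c, d ∈ ℂ with b ≠ 0. Let λ ∈ ℂ be such that the numbers 1 + d·e^{−ib₂λ} and 1 + a·e^{ib₁λ} are not both zero. Define vectors f, g ∈ L²([0,1];ℂ²) by f(x) := ( b·e^{ib₁λx}, −(1 + a·e^{ib₁λ})·e^{ib₂λx} ) and by requiring that the complex conjugate of g satisfies ḡ(x) = ( (1 + d·e^{−ib₂λ})·e^{−ib₁λx}, −k·b·e^{−ib₂λx} ). Then ‖f‖² · ‖g‖² = |⟨f, g⟩|² holds if and only if Im λ = 0 and k·|b|² = (1 + d·e^{−ib₂λ}) · conj(1 + a·e^{ib₁λ}). -/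

import Mathlib

open MeasureTheory

noncomputable def Gfun (c : ℝ) : ℝ := if c = 0 then 1 else (Real.exp c - 1)/c

lemma Gfun_integral (c : ℝ) : (∫ x in (0:ℝ)..1, Real.exp (c*x)) = Gfun c := by
  unfold Gfun
  split_ifs with h
  · simp [h]
  · rw [intervalIntegral.integral_comp_mul_left Real.exp h, integral_exp]
    simp [smul_eq_mul]
    field_simp

lemma Gfun_pos (c : ℝ) : 0 < Gfun c := by
  unfold Gfun
  split_ifs with h
  · norm_num
  · rcases lt_or_gt_of_ne h with h' | h'
    · apply div_pos_of_neg_of_neg _ h'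
      simp [Real.exp_lt_one_iff.2 h']
    · apply div_pos _ h'
      nlinarith [Real.add_one_lt_exp (ne_of_gt h')]

lemma Gfun_zero : Gfun 0 = 1 := by simp [Gfun]

lemma one_lt_Gfun_mul (c : ℝ) (h : c ≠ 0) : 1 < Gfun c * Gfun (-c) := by
  have hc2 : c/2 ≠ 0 := by simpa using h
  have hs : (c/2)^2 < Real.sinh (c/2)^2 := by
    rcases lt_or_gt_of_ne hc2 with h' | h'
    · have := Real.self_lt_sinh_iff.2 (by linarith : (0:ℝ) < -(c/2))
      rw [Real.sinh_neg] at this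
      nlinarith
    · have := Real.self_lt_sinh_iff.2 h'
      nlinarith
  have key : (Real.exp c - 1) * (Real.exp (-c) - 1) = -(2*Real.sinh (c/2))^2 := by
    rw [Real.sinh_eq]
    have e1 : Real.exp c = Real.exp (c/2) * Real.exp (c/2) := by
      rw [← Real.exp_add]; ring_nf
    have e2 : Real.exp (-c) = (Real.exp (c/2))⁻¹ * (Real.exp (c/2))⁻¹ := by
      rw [← Real.exp_neg, ← Real.exp_add]; ring_nf
    have e3 : Real.exp (-(c/2)) = (Real.exp (c/2))⁻¹ := Real.exp_neg _
    rw [e1, e2, e3]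
    have hu : Real.exp (c/2) ≠ 0 := Real.exp_ne_zero _
    field_simp
    ring
  rw [Gfun, Gfun, if_neg h, if_neg (neg_ne_zero.2 h), div_mul_div_comm]
  rw [show (Real.exp c - 1) * (Real.exp (-c) - 1) = -(2*Real.sinh (c/2))^2 from key]
  rw [show c * (-c) = -(c^2) by ring, neg_div_neg_eq]
  rw [lt_div_iff₀ (by positivity)]
  nlinarith

lemma normsq_exp (lam : ℂ) (β : ℝ) (x : ℝ) :
    ‖Complex.exp (Complex.I * β * lam * x)‖^2 = Real.exp ((-2*β*lam.im) * x) := by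
  rw [Complex.norm_exp, sq, ← Real.exp_add]
  congr 1
  simp [Complex.mul_re, Complex.mul_im]
  ring

lemma normsq_exp_neg (lam : ℂ) (β : ℝ) (x : ℝ) :
    ‖Complex.exp (-(Complex.I * β * lam * x))‖^2 = Real.exp ((2*β*lam.im) * x) := by
  rw [Complex.norm_exp, sq, ← Real.exp_add]
  congr 1
  simp [Complex.mul_re, Complex.mul_im]
  ring

lemma cross_ineq (x y Q R : ℝ) (hx : 0 ≤ x) (hy : 0 ≤ y) (hQ : 0 < Q) (hR : 0 < R)
    (hQR : 1 ≤ Q*R) : 2*x*y ≤ x^2*Q + y^2*R := by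
  have h1 : y^2 ≤ y^2*(Q*R) := le_mul_of_one_le_right (sq_nonneg y) hQR
  nlinarith [sq_nonneg (x*Q - y), mul_pos hQ hR, sq_nonneg (x - y)]

lemma main_ineq (B Ap Dp K g1 g1' g2 g2' : ℝ) (hB : 0 < B) (hAp : 0 ≤ Ap) (hDp : 0 ≤ Dp)
    (hK : 0 < K) (hg1 : 0 < g1) (hg1' : 0 < g1') (hg2 : 0 < g2) (hg2' : 0 < g2')
    (hP1 : 1 < g1*g1') (hP2 : 1 < g2*g2') (hDA : 0 < Dp ∨ 0 < Ap) :
    (B*Dp + K*Ap*B)^2 < (B^2*g1 + Ap^2*g2) * (Dp^2*g1' + K^2*B^2*g2') := by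
  have hQR : 1 ≤ (g1*g2')*(g2*g1') := by nlinarith
  have hcross := cross_ineq (K*B^2) (Ap*Dp) (g1*g2') (g2*g1')
    (by positivity) (by positivity) (by positivity) (by positivity) hQR
  rcases hDA with hD | hA
  · nlinarith [mul_pos (mul_pos (mul_pos hB hB) (mul_pos hD hD)) (sub_pos.2 hP1),
      mul_nonneg (mul_nonneg (mul_nonneg (mul_nonneg (le_of_lt hK) (le_of_lt hK)) (mul_nonneg hAp hAp)) (mul_nonneg (le_of_lt hB) (le_of_lt hB))) (le_of_lt (sub_pos.2 hP2))]
  · nlinarith [mul_nonneg (mul_nonneg (mul_nonneg (le_of_lt hB) (le_of_lt hB)) (mul_nonneg hDp hDp)) (le_of_lt (sub_pos.2 hP1)),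
      mul_pos (mul_pos (mul_pos (mul_pos hK hK) (mul_pos hA hA)) (mul_pos hB hB)) (sub_pos.2 hP2)]

/-- For the eigenfunctions `f` (of the unperturbed Dirac-type operator) and `g` (of its
adjoint) given by explicit exponentials, the Cauchy–Schwarz inequality
`‖f‖²‖g‖² ≥ |⟨f,g⟩|²` turns into equality iff `Im λ = 0` and
`k|b|² = (1 + d e^{-ib₂λ}) conj(1 + a e^{ib₁λ})`, where `k = -b₂/b₁`. -/
theorem stmt17 (b₁ b₂ : ℝ) (hb₁ : b₁ < 0) (hb₂ : 0 < b₂)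
    (a b c d : ℂ) (hb : b ≠ 0) (lam : ℂ)
    (hnz : ¬(1 + d * Complex.exp (-(Complex.I * b₂ * lam)) = 0 ∧
             1 + a * Complex.exp (Complex.I * b₁ * lam) = 0)) :
    ((∫ x in (0:ℝ)..1,
        (‖b * Complex.exp (Complex.I * b₁ * lam * x)‖ ^ 2 +
         ‖-(1 + a * Complex.exp (Complex.I * b₁ * lam)) *
            Complex.exp (Complex.I * b₂ * lam * x)‖ ^ 2)) *
      (∫ x in (0:ℝ)..1,
        (‖(1 + d * Complex.exp (-(Complex.I * b₂ * lam))) *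
            Complex.exp (-(Complex.I * b₁ * lam * x))‖ ^ 2 +
         ‖-(((-b₂ / b₁ : ℝ) : ℂ)) * b * Complex.exp (-(Complex.I * b₂ * lam * x))‖ ^ 2)) =
      ‖∫ x in (0:ℝ)..1,
          (b * Complex.exp (Complex.I * b₁ * lam * x)) *
              ((1 + d * Complex.exp (-(Complex.I * b₂ * lam))) *
                Complex.exp (-(Complex.I * b₁ * lam * x))) +
            (-(1 + a * Complex.exp (Complex.I * b₁ * lam)) *
                Complex.exp (Complex.I * b₂ * lam * x)) *
              (-(((-b₂ / b₁ : ℝ) : ℂ)) * b *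
                Complex.exp (-(Complex.I * b₂ * lam * x)))‖ ^ 2)
    ↔ (lam.im = 0 ∧
        (((-b₂ / b₁ : ℝ) : ℂ)) * ((‖b‖ : ℝ) : ℂ) ^ 2 =
          (1 + d * Complex.exp (-(Complex.I * b₂ * lam))) *
            (starRingEnd ℂ) (1 + a * Complex.exp (Complex.I * b₁ * lam))) := by
  set K : ℝ := -b₂ / b₁ with hKdef
  have hKpos : 0 < K := div_pos_of_neg_of_neg (by linarith) hb₁
  set A : ℂ := 1 + a * Complex.exp (Complex.I * b₁ * lam) with hAdef
  set D : ℂ := 1 + d * Complex.exp (-(Complex.I * b₂ * lam)) with hDdef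
  -- first integral
  have h1 : (∫ x in (0:ℝ)..1,
        (‖b * Complex.exp (Complex.I * b₁ * lam * x)‖ ^ 2 +
         ‖-A * Complex.exp (Complex.I * b₂ * lam * x)‖ ^ 2)) =
      ‖b‖^2 * Gfun (-2*b₁*lam.im) + ‖A‖^2 * Gfun (-2*b₂*lam.im) := by
    have hpt : ∀ x : ℝ,
        (‖b * Complex.exp (Complex.I * b₁ * lam * x)‖ ^ 2 +
         ‖-A * Complex.exp (Complex.I * b₂ * lam * x)‖ ^ 2) =
        ‖b‖^2 * Real.exp ((-2*b₁*lam.im) * x) + ‖A‖^2 * Real.exp ((-2*b₂*lam.im) * x) := by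
      intro x
      rw [norm_mul, norm_mul, norm_neg, mul_pow, mul_pow, normsq_exp, normsq_exp]
    simp only [hpt]
    rw [intervalIntegral.integral_add
        ((by fun_prop : Continuous fun x:ℝ => ‖b‖^2 * Real.exp ((-2*b₁*lam.im) * x)).intervalIntegrable 0 1)
        ((by fun_prop : Continuous fun x:ℝ => ‖A‖^2 * Real.exp ((-2*b₂*lam.im) * x)).intervalIntegrable 0 1),
      intervalIntegral.integral_const_mul, intervalIntegral.integral_const_mul,
      Gfun_integral, Gfun_integral]
  -- second integral
  have h2 : (∫ x in (0:ℝ)..1,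
        (‖D * Complex.exp (-(Complex.I * b₁ * lam * x))‖ ^ 2 +
         ‖-((K:ℝ):ℂ) * b * Complex.exp (-(Complex.I * b₂ * lam * x))‖ ^ 2)) =
      ‖D‖^2 * Gfun (2*b₁*lam.im) + K^2*‖b‖^2 * Gfun (2*b₂*lam.im) := by
    have hpt : ∀ x : ℝ,
        (‖D * Complex.exp (-(Complex.I * b₁ * lam * x))‖ ^ 2 +
         ‖-((K:ℝ):ℂ) * b * Complex.exp (-(Complex.I * b₂ * lam * x))‖ ^ 2) =
        ‖D‖^2 * Real.exp ((2*b₁*lam.im) * x) + K^2*‖b‖^2 * Real.exp ((2*b₂*lam.im) * x) := by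
      intro x
      simp only [norm_mul, norm_neg, mul_pow]
      rw [normsq_exp_neg, normsq_exp_neg, Complex.norm_real, Real.norm_eq_abs,
        abs_of_pos hKpos]
    simp only [hpt]
    rw [intervalIntegral.integral_add
        ((by fun_prop : Continuous fun x:ℝ => ‖D‖^2 * Real.exp ((2*b₁*lam.im) * x)).intervalIntegrable 0 1)
        ((by fun_prop : Continuous fun x:ℝ => K^2*‖b‖^2 * Real.exp ((2*b₂*lam.im) * x)).intervalIntegrable 0 1),
      intervalIntegral.integral_const_mul, intervalIntegral.integral_const_mul,
      Gfun_integral, Gfun_integral]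
  -- third integral
  have h3 : (∫ x in (0:ℝ)..1,
          (b * Complex.exp (Complex.I * b₁ * lam * x)) *
              (D * Complex.exp (-(Complex.I * b₁ * lam * x))) +
            (-A * Complex.exp (Complex.I * b₂ * lam * x)) *
              (-((K:ℝ):ℂ) * b * Complex.exp (-(Complex.I * b₂ * lam * x)))) =
      b * D + ((K:ℝ):ℂ) * A * b := by
    have hpt : ∀ x : ℝ,
        (b * Complex.exp (Complex.I * b₁ * lam * x)) *
            (D * Complex.exp (-(Complex.I * b₁ * lam * x))) +
          (-A * Complex.exp (Complex.I * b₂ * lam * x)) *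
            (-((K:ℝ):ℂ) * b * Complex.exp (-(Complex.I * b₂ * lam * x))) =
        b * D + ((K:ℝ):ℂ) * A * b := by
      intro x
      have e1 : Complex.exp (Complex.I * b₁ * lam * x) *
          Complex.exp (-(Complex.I * b₁ * lam * x)) = 1 := by
        rw [← Complex.exp_add]; simp
      have e2 : Complex.exp (Complex.I * b₂ * lam * x) *
          Complex.exp (-(Complex.I * b₂ * lam * x)) = 1 := by
        rw [← Complex.exp_add]; simp
      linear_combination (b * D) * e1 + (((K:ℝ):ℂ) * A * b) * e2
    simp only [hpt]
    simp
  rw [h1, h2, h3]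
  have hbb : b * (starRingEnd ℂ) b = (((‖b‖:ℝ):ℂ))^2 := by
    rw [Complex.mul_conj]
    rw [Complex.normSq_eq_norm_sq]
    norm_num
  by_cases ht : lam.im = 0
  · simp only [ht, mul_zero, Gfun_zero, mul_one, eq_self_iff_true, true_and]
    have key : (‖b‖^2 + ‖A‖^2) * (‖D‖^2 + K^2*‖b‖^2) =
        ‖b*D + ((K:ℝ):ℂ)*A*b‖^2 +
          ‖((K:ℝ):ℂ)*(b*(starRingEnd ℂ) b) - A*(starRingEnd ℂ) D‖^2 := by
      simp only [Complex.sq_norm, Complex.normSq_apply, Complex.add_re,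
        Complex.add_im, Complex.sub_re, Complex.sub_im, Complex.mul_re, Complex.mul_im,
        Complex.conj_re, Complex.conj_im, Complex.ofReal_re, Complex.ofReal_im]
      ring
    have hconj : ∀ z w : ℂ, (((K:ℝ):ℂ) * (((‖b‖:ℝ):ℂ))^2 = z * (starRingEnd ℂ) w) →
        (((K:ℝ):ℂ) * (((‖b‖:ℝ):ℂ))^2 = w * (starRingEnd ℂ) z) := by
      intro z w h
      have := congrArg (starRingEnd ℂ) h
      simp only [map_mul, map_pow, Complex.conj_ofReal, Complex.conj_conj] at this
      rw [this]; ring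
    constructor
    · intro h
      have hw : ‖((K:ℝ):ℂ)*(b*(starRingEnd ℂ) b) - A*(starRingEnd ℂ) D‖^2 = 0 := by
        linarith [key, h]
      have hw0 : ((K:ℝ):ℂ)*(b*(starRingEnd ℂ) b) - A*(starRingEnd ℂ) D = 0 := by
        have := sq_eq_zero_iff.mp hw
        exact norm_eq_zero.mp this
      have heq : ((K:ℝ):ℂ) * (((‖b‖:ℝ):ℂ))^2 = A * (starRingEnd ℂ) D := by
        rw [← hbb]; linear_combination hw0
      exact hconj A D heq
    · intro h
      have heq : ((K:ℝ):ℂ) * (((‖b‖:ℝ):ℂ))^2 = A * (starRingEnd ℂ) D := hconj D A h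
      have hw0 : ((K:ℝ):ℂ)*(b*(starRingEnd ℂ) b) - A*(starRingEnd ℂ) D = 0 := by
        rw [hbb]; linear_combination heq
      rw [key, hw0]
      simp
  · simp only [ht, false_and, iff_false]
    have hb1 : (-2*b₁*lam.im : ℝ) ≠ 0 :=
      mul_ne_zero (mul_ne_zero (by norm_num) (ne_of_lt hb₁)) ht
    have hb2 : (-2*b₂*lam.im : ℝ) ≠ 0 :=
      mul_ne_zero (mul_ne_zero (by norm_num) (ne_of_gt hb₂)) ht
    have hP1 : 1 < Gfun (-2*b₁*lam.im) * Gfun (2*b₁*lam.im) := by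
      have := one_lt_Gfun_mul (-2*b₁*lam.im) hb1
      rwa [show -(-2*b₁*lam.im) = 2*b₁*lam.im by ring] at this
    have hP2 : 1 < Gfun (-2*b₂*lam.im) * Gfun (2*b₂*lam.im) := by
      have := one_lt_Gfun_mul (-2*b₂*lam.im) hb2
      rwa [show -(-2*b₂*lam.im) = 2*b₂*lam.im by ring] at this
    have hDA : 0 < ‖D‖ ∨ 0 < ‖A‖ := by
      rcases not_and_or.mp hnz with h | h
      · exact Or.inl (norm_pos_iff.mpr h)
      · exact Or.inr (norm_pos_iff.mpr h)
    have hmain := main_ineq ‖b‖ ‖A‖ ‖D‖ K (Gfun (-2*b₁*lam.im)) (Gfun (2*b₁*lam.im))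
      (Gfun (-2*b₂*lam.im)) (Gfun (2*b₂*lam.im)) (norm_pos_iff.mpr hb) (norm_nonneg _)
      (norm_nonneg _) hKpos (Gfun_pos _) (Gfun_pos _) (Gfun_pos _) (Gfun_pos _)
      hP1 hP2 hDA
    have hRn : ‖b*D + ((K:ℝ):ℂ)*A*b‖ ≤ ‖b‖*‖D‖ + K*‖A‖*‖b‖ := by
      calc ‖b*D + ((K:ℝ):ℂ)*A*b‖ ≤ ‖b*D‖ + ‖((K:ℝ):ℂ)*A*b‖ := norm_add_le _ _
        _ = ‖b‖*‖D‖ + K*‖A‖*‖b‖ := by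
            rw [norm_mul, norm_mul, norm_mul, Complex.norm_real, Real.norm_eq_abs,
              abs_of_pos hKpos]
    have hR2 : ‖b*D + ((K:ℝ):ℂ)*A*b‖^2 ≤ (‖b‖*‖D‖ + K*‖A‖*‖b‖)^2 :=
      pow_le_pow_left₀ (norm_nonneg _) hRn 2
    intro hEq
    rw [hEq] at hmain
    nlinarith [hmain, hR2]
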